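/- Let (M_n, f_n : M_{n+1} → M_n) be an inverse system of ℤ_ℓ-modules where each M_n is annihilated by ℓ^(m+n), and suppose each transition map f_n equals multiplication by ℓ composed with an automorphism of M_{n+1} (multiplication by a unit of ℤ_ℓ). Then the image π_0(lim M_n) of the inverse limit in M_0 coincides with the image of the inverse limit of the system (M_n, g_n) where g_n is multiplication by ℓ. -/

import Mathlib

/-- Let (M n) be a decreasing family of ℤ_ℓ-submodules of an ambient
module N with ℓ^(m+n)·M n = 0, and suppose the transition maps of the inverse system are
multiplication by ℓ·u n for units u n of ℤ_ℓ (multiplication by ℓ composed with an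
automorphism).  Then the set of initial terms of coherent sequences for these maps
coincides with the set of initial terms of coherent sequences for multiplication by ℓ. -/
theorem stmt_13 (ℓ : ℕ) [Fact ℓ.Prime] (m : ℕ) (hm : 1 ≤ m)
    (N : Type) [AddCommGroup N] [Module ℤ_[ℓ] N]
    (M : ℕ → Submodule ℤ_[ℓ] N)
    (htor : ∀ n, ∀ x ∈ M n, ((ℓ : ℤ_[ℓ]) ^ (m + n)) • x = 0)
    (u : ℕ → ℤ_[ℓ]ˣ) :
    {x0 : N | x0 ∈ M 0 ∧ ∃ x : ℕ → N, (∀ n, x n ∈ M n) ∧ x 0 = x0 ∧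
        ∀ n, x n = ((ℓ : ℤ_[ℓ]) * (u n : ℤ_[ℓ])) • x (n + 1)}
      = {x0 : N | x0 ∈ M 0 ∧ ∃ x : ℕ → N, (∀ n, x n ∈ M n) ∧ x 0 = x0 ∧
        ∀ n, x n = (ℓ : ℤ_[ℓ]) • x (n + 1)} := by
  ext x0
  simp only [Set.mem_setOf_eq]
  constructor
  · rintro ⟨hx0, x, hmem, h0, hrec⟩
    refine ⟨hx0, fun n => ((∏ k ∈ Finset.range n, u k : ℤ_[ℓ]ˣ) : ℤ_[ℓ]) • x n,
      fun n => (M n).smul_mem _ (hmem n), by simp [h0], fun n => ?_⟩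
    simp only []
    rw [hrec n, smul_smul, smul_smul, Finset.prod_range_succ]
    congr 1
    push_cast
    ring
  · rintro ⟨hx0, x, hmem, h0, hrec⟩
    refine ⟨hx0, fun n => (((∏ k ∈ Finset.range n, u k)⁻¹ : ℤ_[ℓ]ˣ) : ℤ_[ℓ]) • x n,
      fun n => (M n).smul_mem _ (hmem n), by simp [h0], fun n => ?_⟩
    simp only []
    rw [hrec n, smul_smul, smul_smul]
    congr 1
    have : (ℓ : ℤ_[ℓ]) * (u n : ℤ_[ℓ]) * (((∏ k ∈ Finset.range (n+1), u k)⁻¹ : ℤ_[ℓ]ˣ) : ℤ_[ℓ])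
        * ((∏ k ∈ Finset.range (n+1), u k : ℤ_[ℓ]ˣ) : ℤ_[ℓ])
        = (((∏ k ∈ Finset.range n, u k)⁻¹ : ℤ_[ℓ]ˣ) : ℤ_[ℓ]) * (ℓ : ℤ_[ℓ])
        * ((∏ k ∈ Finset.range (n+1), u k : ℤ_[ℓ]ˣ) : ℤ_[ℓ]) := by
      rw [Finset.prod_range_succ]
      push_cast
      simp only [mul_inv_rev, Units.val_mul, Units.coe_prod]
      linear_combination (ℓ : ℤ_[ℓ]) * (((∏ k ∈ Finset.range n, u k)⁻¹ : ℤ_[ℓ]ˣ) : ℤ_[ℓ]) * (∏ k ∈ Finset.range n, (u k : ℤ_[ℓ])) * (u n : ℤ_[ℓ]) * (Units.mul_inv (u n))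
    exact (mul_right_cancel₀ (Units.ne_zero _) this).symm
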